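/- The order type of (T_2[0], <), the addition-free theta-term notation system with two function symbols ϑ_0, ϑ_1 restricted to terms α with S(α) ≤ 0, is exactly ω^(ω^ω). -/

import Mathlib

/-- Addition-free theta terms. -/
inductive TTerm : Type
  | zero : TTerm
  | theta : ℕ → TTerm → TTerm
  deriving DecidableEq

namespace TTerm

/-- `S 0 = -1`, `S (ϑ_i α) = i`. -/
def S : TTerm → ℤ
  | zero => -1
  | theta i _ => i

/-- Membership in the term system `T`: `ϑ_i α` is formed only when `S α ≤ i + 1`. -/
inductive WF : TTerm → Prop
  | zero : WF zero
  | theta {i : ℕ} {a : TTerm} : WF a → S a ≤ (i : ℤ) + 1 → WF (theta i a)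

/-- Coefficients `k_i`. -/
def k (i : ℕ) : TTerm → TTerm
  | zero => zero
  | theta j b => if j ≤ i then theta j b else k i b

mutual
/-- The linear order on theta terms. -/
inductive Lt : TTerm → TTerm → Prop
  | zero {a : TTerm} : a ≠ zero → Lt zero a
  | idx {i j : ℕ} {a b : TTerm} : i < j → Lt (theta i a) (theta j b)
  | left {i : ℕ} {a b : TTerm} : Lt a b → Lt (k i a) (theta i b) →
      Lt (theta i a) (theta i b)
  | right {i : ℕ} {a b : TTerm} : Lt b a → Le (theta i a) (k i b) →
      Lt (theta i a) (theta i b)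

inductive Le : TTerm → TTerm → Prop
  | refl {a : TTerm} : Le a a
  | of_lt {a b : TTerm} : Lt a b → Le a b
end

end TTerm

/-- All indices occurring in a term are `< n`. -/
def TTerm.idxBound (n : ℕ) : TTerm → Prop
  | TTerm.zero => True
  | TTerm.theta i a => i < n ∧ TTerm.idxBound n a

/-- Membership in `T_2[0]`: well-formed, indices `< 2`, and `S α ≤ 0`. -/
def T2zero (t : TTerm) : Prop := TTerm.WF t ∧ TTerm.idxBound 2 t ∧ TTerm.S t ≤ 0

namespace TTerm

open Ordinal Order

universe u

noncomputable section

/-- `Sp p = ω ^ ω ^ p`. -/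
def Sp (p : ℕ) : Ordinal.{u} := omega0 ^ omega0 ^ (p : Ordinal)

/-- `Om = ω ^ ω ^ ω`. -/
def Om : Ordinal.{u} := omega0 ^ omega0 ^ omega0

/-- The level-`p` collapse of a countable value. -/
def Gv (p : ℕ) (α : Ordinal.{u}) : Ordinal.{u} :=
  Sp (p + 1) * (α / Sp (p + 1)) + Sp p * (1 + α % Sp (p + 1))

lemma Sp_eq (p : ℕ) : Sp.{u} p = omega0 ^ omega0 ^ (p : Ordinal) := rfl

lemma Om_eq : Om.{u} = omega0 ^ omega0 ^ omega0 := rfl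

lemma Sp_pos (p : ℕ) : 0 < Sp.{u} p := opow_pos _ omega0_pos

lemma Sp_ne_zero (p : ℕ) : Sp.{u} p ≠ 0 := (Sp_pos p).ne'

lemma one_lt_Sp (p : ℕ) : 1 < Sp.{u} p := by
  have h : (omega0 : Ordinal.{u}) ^ (0 : Ordinal) < omega0 ^ (omega0 ^ (p : Ordinal)) :=
    (opow_lt_opow_iff_right one_lt_omega0).2 (opow_pos _ omega0_pos)
  simpa [Sp_eq] using h

lemma omega0_le_Sp (p : ℕ) : omega0 ≤ Sp.{u} p := by
  have h : (omega0 : Ordinal.{u}) ^ (1 : Ordinal) ≤ omega0 ^ (omega0 ^ (p : Ordinal)) := by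
    apply opow_le_opow_right omega0_pos
    exact one_le_iff_pos.2 (opow_pos _ omega0_pos)
  simpa [Sp_eq] using h

lemma Sp_lt_Sp {p q : ℕ} (h : p < q) : Sp.{u} p < Sp q := by
  rw [Sp_eq, Sp_eq]
  apply (opow_lt_opow_iff_right one_lt_omega0).2
  exact (opow_lt_opow_iff_right one_lt_omega0).2 (Nat.cast_lt.2 h)

lemma Sp_isLimit (p : ℕ) : IsSuccLimit (Sp.{u} p) :=
  isSuccLimit_opow_left isSuccLimit_omega0 (opow_ne_zero _ omega0_ne_zero)

lemma Sp_lt_Om (p : ℕ) : Sp.{u} p < Om := by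
  rw [Sp_eq, Om_eq]
  apply (opow_lt_opow_iff_right one_lt_omega0).2
  exact (opow_lt_opow_iff_right one_lt_omega0).2 (nat_lt_omega0 p)

lemma Om_isLimit : IsSuccLimit Om.{u} :=
  isSuccLimit_opow_left isSuccLimit_omega0 (opow_ne_zero _ omega0_ne_zero)

lemma Om_pos : 0 < Om.{u} := Om_isLimit.pos

lemma Sp_add_principal {p : ℕ} {a b : Ordinal.{u}} (ha : a < Sp p) (hb : b < Sp p) :
    a + b < Sp p := by
  rw [Sp_eq] at *
  exact principal_add_omega0_opow _ ha hb

lemma Om_add_principal {a b : Ordinal.{u}} (ha : a < Om) (hb : b < Om) : a + b < Om := by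
  rw [Om_eq] at *
  exact principal_add_omega0_opow _ ha hb

lemma Sp_mul_Sp (p : ℕ) : Sp.{u} p * Sp (p + 1) = Sp (p + 1) := by
  rw [Sp_eq, Sp_eq, ← opow_add]
  congr 1
  apply add_omega0_opow
  exact (opow_lt_opow_iff_right one_lt_omega0).2 (Nat.cast_lt.2 p.lt_succ_self)

lemma Sp_dvd_Sp {p q : ℕ} (h : p ≤ q) : Sp.{u} p ∣ Sp q :=
  opow_dvd_opow _ (opow_le_opow_right omega0_pos (Nat.cast_le.2 h))

lemma Sp_succ_eq (p : ℕ) : Sp.{u} (p + 1) = Sp p ^ (omega0 : Ordinal) := by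
  rw [Sp_eq, Sp_eq, ← opow_mul]
  congr 1
  rw [Nat.cast_succ, add_one_eq_succ, opow_succ]

/-- Key absorption bound: `Sp p * (1 + x) < Sp (p+1)` for `x < Sp (p+1)`. -/
lemma Sp_mul_one_add_lt {p : ℕ} {x : Ordinal.{u}} (hx : x < Sp (p + 1)) :
    Sp p * (1 + x) < Sp (p + 1) := by
  have h1 : 1 + x < Sp.{u} (p + 1) := Sp_add_principal (one_lt_Sp _) hx
  calc Sp.{u} p * (1 + x) < Sp p * Sp (p + 1) := (mul_lt_mul_iff_of_pos_left (Sp_pos p)).2 h1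
    _ = Sp (p + 1) := Sp_mul_Sp p

lemma Gv_lt_Om {p : ℕ} {α : Ordinal.{u}} (hα : α < Om) : Gv p α < Om := by
  apply Om_add_principal
  · exact lt_of_le_of_lt (mul_div_le α (Sp (p + 1))) hα
  · exact lt_trans (Sp_mul_one_add_lt (mod_lt α (Sp_ne_zero _))) (Sp_lt_Om _)

/-- `δ < Sp p * (1 + δ)` whenever `δ < Sp (p+1)`. -/
lemma lt_Sp_mul_one_add {p : ℕ} {δ : Ordinal.{u}} (hδ : δ < Sp (p + 1)) :
    δ < Sp p * (1 + δ) := by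
  by_contra hcon
  push_neg at hcon
  have hn : ∀ n : ℕ, Sp.{u} p ^ (n : Ordinal) ≤ δ := by
    intro n
    induction n with
    | zero =>
      have h1 : Sp.{u} p ≤ δ := by
        calc Sp.{u} p = Sp p * 1 := (mul_one _).symm
          _ ≤ Sp p * (1 + δ) := mul_le_mul_right (le_self_add) _
          _ ≤ δ := hcon
      simpa using le_trans (one_lt_Sp p).le h1
    | succ n ih =>
      have he : Sp.{u} p ^ ((n + 1 : ℕ) : Ordinal) = Sp p * Sp p ^ (n : Ordinal) := by
        have h2 : ((n + 1 : ℕ) : Ordinal) = 1 + (n : Ordinal) := by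
          rw [show n + 1 = 1 + n from Nat.add_comm n 1, Nat.cast_add, Nat.cast_one]
        rw [h2, opow_add, opow_one]
      rw [he]
      calc Sp.{u} p * Sp p ^ (n : Ordinal) ≤ Sp p * (1 + δ) := by
            apply mul_le_mul_right
            exact le_trans ih (le_add_self)
        _ ≤ δ := hcon
  have hfin : Sp.{u} (p + 1) ≤ δ := by
    rw [Sp_succ_eq]
    rw [opow_le_of_isSuccLimit (Sp_ne_zero p) isSuccLimit_omega0]
    intro b hb
    obtain ⟨n, rfl⟩ := lt_omega0.1 hb
    exact hn n
  exact absurd hδ (not_lt.2 hfin)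

lemma lt_Gv (p : ℕ) (α : Ordinal.{u}) : α < Gv p α := by
  conv_lhs => rw [← Ordinal.div_add_mod α (Sp.{u} (p + 1))]
  unfold Gv
  exact add_lt_add_right (lt_Sp_mul_one_add (mod_lt α (Sp_ne_zero _))) _

lemma Gv_pos (p : ℕ) (α : Ordinal.{u}) : 0 < Gv p α :=
  lt_of_le_of_lt zero_le (lt_Gv p α)

lemma Sp_dvd_Gv (p : ℕ) (α : Ordinal.{u}) : Sp p ∣ Gv p α := by
  obtain ⟨c, hc⟩ := Sp_dvd_Sp.{u} (show p ≤ p + 1 by omega)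
  refine ⟨c * (α / Sp (p + 1)) + (1 + α % Sp (p + 1)), ?_⟩
  show Sp (p + 1) * (α / Sp (p + 1)) + Sp p * (1 + α % Sp (p + 1)) = _
  conv_rhs => rw [mul_add, ← mul_assoc, ← hc]

lemma Gv_isLimit (p : ℕ) (α : Ordinal.{u}) : IsSuccLimit (Gv p α) := by
  unfold Gv
  have h2 : IsSuccLimit (Sp.{u} p * (1 + α % Sp (p + 1))) :=
    isSuccLimit_mul_left (Sp_isLimit p) (lt_of_lt_of_le zero_lt_one le_self_add)
  rcases (eq_zero_or_pos (Sp.{u} (p + 1) * (α / Sp (p + 1)))) with h | h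
  · rw [h, zero_add]
    exact h2
  · exact isSuccLimit_add _ h2

lemma div_mono {a b c : Ordinal.{u}} (h : a ≤ b) : a / c ≤ b / c := by
  rcases eq_or_ne c 0 with rfl | hc
  · simpa [Ordinal.div_zero] using h
  · rw [Ordinal.le_div hc]
    exact le_trans (mul_div_le a c) h

lemma Gv_mono {p : ℕ} {α β : Ordinal.{u}} (h : α < β) : Gv p α < Gv p β := by
  have hq : α / Sp.{u} (p + 1) ≤ β / Sp (p + 1) := div_mono h.le
  rcases lt_or_eq_of_le hq with hq' | hq'
  · unfold Gv
    calc Sp.{u} (p + 1) * (α / Sp (p + 1)) + Sp p * (1 + α % Sp (p + 1))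
        < Sp (p + 1) * (α / Sp (p + 1)) + Sp (p + 1) :=
          add_lt_add_right (Sp_mul_one_add_lt (mod_lt α (Sp_ne_zero _))) _
      _ = Sp (p + 1) * succ (α / Sp (p + 1)) := (mul_succ _ _).symm
      _ ≤ Sp (p + 1) * (β / Sp (p + 1)) := mul_le_mul_right (succ_le_of_lt hq') _
      _ ≤ Sp (p + 1) * (β / Sp (p + 1)) + Sp p * (1 + β % Sp (p + 1)) := le_self_add
  · have hm : α % Sp.{u} (p + 1) < β % Sp (p + 1) := by
      have h1 : Sp.{u} (p + 1) * (α / Sp (p + 1)) + α % Sp (p + 1)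
          < Sp (p + 1) * (β / Sp (p + 1)) + β % Sp (p + 1) := by
        rw [Ordinal.div_add_mod α (Sp.{u} (p + 1)), Ordinal.div_add_mod β (Sp.{u} (p + 1))]
        exact h
      rw [← hq'] at h1
      exact (add_lt_add_iff_left _).1 h1
    unfold Gv
    rw [hq']
    apply add_lt_add_right
    exact (mul_lt_mul_iff_of_pos_left (Sp_pos p)).2 (add_lt_add_right hm 1)

/-- If `Sp (p+1)` divides `T` and `α < T` then `Gv p α < T`. -/
lemma Gv_lt_of_dvd {p : ℕ} {α T : Ordinal.{u}} (hdvd : Sp (p + 1) ∣ T) (hα : α < T) :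
    Gv p α < T := by
  obtain ⟨K, rfl⟩ := hdvd
  have hMK : α / Sp.{u} (p + 1) < K := by
    by_contra hc
    push_neg at hc
    exact absurd hα (not_lt.2 (le_trans (mul_le_mul_right hc _) (mul_div_le α _)))
  calc Gv.{u} p α < Sp (p + 1) * (α / Sp (p + 1)) + Sp (p + 1) :=
        add_lt_add_right (Sp_mul_one_add_lt (mod_lt α (Sp_ne_zero _))) _
    _ = Sp (p + 1) * succ (α / Sp (p + 1)) := (mul_succ _ _).symm
    _ ≤ Sp (p + 1) * K := mul_le_mul_right (succ_le_of_lt hMK) _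

lemma Gv_zero (p : ℕ) : Gv.{u} p 0 = Sp p := by
  simp [Gv]

/-- Combined value function: `(Wv t).1` is the value of `ϑ₀ t`, and
`(Wv t).2 p` is the value of `ϑ₀` applied to `p+1` copies of `ϑ₁` above `t`. -/
def Wv : TTerm → Ordinal.{u} × (ℕ → Ordinal.{u})
  | zero => (1, fun p => Gv p 0)
  | theta 0 x => ((Wv x).1 + 1, fun p => Gv p (Wv x).1)
  | theta 1 z => ((Wv z).2 0, fun p => (Wv z).2 (p + 1))
  | theta (_ + 2) _ => (0, fun _ => 0)

def Phi (t : TTerm) : Ordinal.{u} := (Wv t).1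

def A (p : ℕ) (t : TTerm) : Ordinal.{u} := (Wv t).2 p

@[simp] lemma Phi_zero : Phi.{u} zero = 1 := rfl
@[simp] lemma Phi_theta0 (x : TTerm) : Phi.{u} (theta 0 x) = Phi x + 1 := rfl
@[simp] lemma Phi_theta1 (z : TTerm) : Phi.{u} (theta 1 z) = A 0 z := rfl
@[simp] lemma A_zeroT (p : ℕ) : A.{u} p zero = Gv p 0 := rfl
@[simp] lemma A_theta0 (p : ℕ) (x : TTerm) : A.{u} p (theta 0 x) = Gv p (Phi x) := rfl
@[simp] lemma A_theta1 (p : ℕ) (z : TTerm) : A.{u} p (theta 1 z) = A (p + 1) z := rfl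

/-- Global value function. -/
def V : TTerm → Ordinal.{u}
  | zero => 0
  | theta 0 x => Phi x
  | theta 1 z => Om * (1 + V z)
  | theta (_ + 2) _ => 0

@[simp] lemma V_zero : V.{u} zero = 0 := rfl
@[simp] lemma V_theta0 (x : TTerm) : V.{u} (theta 0 x) = Phi x := rfl
@[simp] lemma V_theta1 (z : TTerm) : V.{u} (theta 1 z) = Om * (1 + V z) := rfl

lemma idxBound_theta {n i : ℕ} {a : TTerm} (h : idxBound n (theta i a)) :
    i < n ∧ idxBound n a := h

lemma idxBound_k {n i : ℕ} {t : TTerm} (h : idxBound n t) : idxBound n (k i t) := by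
  induction t with
  | zero => exact h
  | theta j b ih =>
    rw [k]
    split
    · exact h
    · exact ih h.2

lemma A_dvd {z : TTerm} (h : idxBound 2 z) :
    ∀ p : ℕ, Sp.{u} p ∣ A.{u} p z ∧ A.{u} p z ≠ 0 := by
  revert h
  induction z with
  | zero =>
    intro _ p
    simp only [A_zeroT, Gv_zero]
    exact ⟨dvd_rfl, Sp_ne_zero p⟩
  | theta j w ih =>
    intro h p
    obtain ⟨hj, hw⟩ := idxBound_theta h
    interval_cases j
    · simp only [A_theta0]
      exact ⟨Sp_dvd_Gv p _, (Gv_pos p _).ne'⟩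
    · simp only [A_theta1]
      obtain ⟨h1, h2⟩ := ih hw (p + 1)
      exact ⟨dvd_trans (Sp_dvd_Sp p.le_succ) h1, h2⟩

lemma A_isLimit {z : TTerm} (h : idxBound 2 z) {p : ℕ} : IsSuccLimit (A.{u} p z) := by
  revert h
  induction z generalizing p with
  | zero =>
    intro _
    simpa [A_zeroT, Gv_zero] using Sp_isLimit.{u} p
  | theta j w ih =>
    intro h
    obtain ⟨hj, hw⟩ := idxBound_theta h
    interval_cases j
    · simpa using Gv_isLimit.{u} p (Phi w)
    · simpa using ih (p := p + 1) hw

lemma Phi_lt_Om {t : TTerm} (h : idxBound 2 t) :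
    Phi.{u} t < Om.{u} ∧ ∀ p : ℕ, A.{u} p t < Om.{u} := by
  revert h
  induction t with
  | zero =>
    intro _
    constructor
    · calc Phi.{u} zero = 1 := rfl
        _ < omega0 := one_lt_omega0
        _ ≤ Sp 0 := omega0_le_Sp 0
        _ ≤ Om := (Sp_lt_Om 0).le
    · intro p
      simpa [A_zeroT, Gv_zero] using Sp_lt_Om.{u} p
  | theta j w ih =>
    intro h
    obtain ⟨hj, hw⟩ := idxBound_theta h
    obtain ⟨ih1, ih2⟩ := ih hw
    interval_cases j
    · constructor
      · have hs : succ (Phi.{u} w) < Om := Om_isLimit.succ_lt ih1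
        simpa using hs
      · intro p
        simpa using Gv_lt_Om ih1
    · exact ⟨by simpa using ih2 0, fun p => by simpa using ih2 (p + 1)⟩

lemma one_le_Phi {t : TTerm} (h : idxBound 2 t) : 1 ≤ Phi.{u} t := by
  cases t with
  | zero => simp
  | theta j w =>
    obtain ⟨hj, hw⟩ := idxBound_theta h
    interval_cases j
    · simpa using le_add_self
    · simp only [Phi_theta1]
      exact (one_lt_of_isSuccLimit (A_isLimit hw)).le

lemma V_lt_Om_of_S_le {t : TTerm} (h : idxBound 2 t) (hS : S t ≤ 0) : V.{u} t < Om := by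
  cases t with
  | zero => simpa using Om_pos.{u}
  | theta j w =>
    obtain ⟨hj, hw⟩ := idxBound_theta h
    have hj0 : j = 0 := by
      simp only [S] at hS
      exact_mod_cast le_antisymm (by exact_mod_cast hS) j.zero_le
    subst hj0
    simpa using (Phi_lt_Om hw).1

lemma V_pos {t : TTerm} (h : idxBound 2 t) (ht : t ≠ zero) : 0 < V.{u} t := by
  cases t with
  | zero => exact absurd rfl ht
  | theta j w =>
    obtain ⟨hj, hw⟩ := idxBound_theta h
    interval_cases j
    · simpa using lt_of_lt_of_le zero_lt_one (one_le_Phi hw)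
    · simp only [V_theta1]
      exact lt_of_lt_of_le Om_pos
        (le_mul_left Om (lt_of_lt_of_le zero_lt_one le_self_add))

lemma Om_le_V_theta1 (z : TTerm) : Om.{u} ≤ V.{u} (theta 1 z) := by
  simp only [V_theta1]
  exact le_mul_left Om (lt_of_lt_of_le zero_lt_one le_self_add)

lemma V_theta1_lt_iff {x y : TTerm} : V.{u} (theta 1 x) < V (theta 1 y) ↔ V.{u} x < V.{u} y := by
  simp only [V_theta1]
  rw [mul_lt_mul_iff_of_pos_left Om_pos]
  exact ⟨fun h => (add_lt_add_iff_left 1).1 h, fun h => (add_lt_add_iff_left 1).2 h⟩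

/-- `V t < Om * (1 + V t)`. -/
lemma V_lt_Om_mul {t : TTerm} (h : idxBound 2 t) : V.{u} t < Om * (1 + V t) := by
  revert h
  induction t with
  | zero =>
    intro _
    simpa using Om_pos.{u}
  | theta j w ih =>
    intro h
    obtain ⟨hj, hw⟩ := idxBound_theta h
    interval_cases j
    · calc V.{u} (theta 0 w) < Om := by simpa using (Phi_lt_Om hw).1
        _ ≤ Om * (1 + V (theta 0 w)) :=
          le_mul_left Om (lt_of_lt_of_le zero_lt_one le_self_add)
    · simp only [V_theta1]
      rw [mul_lt_mul_iff_of_pos_left Om_pos]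
      exact add_lt_add_right (ih hw) 1

@[simp] lemma k_zero_zero : k 0 zero = zero := rfl
lemma k_theta0 (i : ℕ) (x : TTerm) : k i (theta 0 x) = theta 0 x := by simp [k]
lemma k_zero_theta1 (z : TTerm) : k 0 (theta 1 z) = k 0 z := by simp [k]
lemma k_le_idx (i j : ℕ) (w : TTerm) (h : j ≤ i) : k i (theta j w) = theta j w := by
  simp [k, h]

lemma V_k_lt_A {z : TTerm} (h : idxBound 2 z) : ∀ p : ℕ, V.{u} (k 0 z) < A.{u} p z := by
  revert h
  induction z with
  | zero =>
    intro _ p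
    simpa [Gv_zero] using Sp_pos.{u} p
  | theta j w ih =>
    intro h p
    obtain ⟨hj, hw⟩ := idxBound_theta h
    interval_cases j
    · rw [k_theta0]
      simpa using lt_Gv.{u} p (Phi w)
    · rw [k_zero_theta1]
      simpa using ih hw (p + 1)

lemma V_k_lt_Phi {t : TTerm} (h : idxBound 2 t) : V.{u} (k 0 t) < Phi.{u} t := by
  cases t with
  | zero => simpa using zero_lt_one
  | theta j w =>
    obtain ⟨hj, hw⟩ := idxBound_theta h
    interval_cases j
    · rw [k_theta0]
      simpa using lt_add_of_pos_right (Phi.{u} w) zero_lt_one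
    · rw [k_zero_theta1]
      simpa using V_k_lt_A hw 0

/-- Core comparison lemma at the `A` level. -/
lemma A_lt_A {z : TTerm} (hz : idxBound 2 z) :
    ∀ z' : TTerm, idxBound 2 z' → ∀ p : ℕ, V.{u} z < V z' → V.{u} (k 0 z) < A p z' →
      A.{u} p z < A p z' := by
  revert hz
  induction z with
  | zero =>
    intro _ z' hz' p h1 h2
    cases z' with
    | zero => exact absurd h1 (lt_irrefl _)
    | theta j' w' =>
      obtain ⟨hj', hw'⟩ := idxBound_theta hz'
      interval_cases j'
      · have hpos : (0 : Ordinal.{u}) < Phi w' := lt_of_lt_of_le zero_lt_one (one_le_Phi hw')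
        simp only [A_zeroT, A_theta0, Gv_zero]
        rw [← Gv_zero.{u} p]
        exact Gv_mono hpos
      · simp only [A_zeroT, A_theta1, Gv_zero]
        rw [← Gv_zero.{u} p]
        apply Gv_lt_of_dvd (A_dvd hw' (p + 1)).1
        exact pos_iff_ne_zero.2 (A_dvd hw' (p + 1)).2
  | theta j w ih =>
    intro hz z' hz' p h1 h2
    obtain ⟨hj, hw⟩ := idxBound_theta hz
    interval_cases j
    · cases z' with
      | zero =>
        exact absurd (lt_of_le_of_lt zero_le h1) (lt_irrefl _)
      | theta j' w' =>
        obtain ⟨hj', hw'⟩ := idxBound_theta hz'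
        interval_cases j'
        · simp only [A_theta0]
          exact Gv_mono (by simpa using h1)
        · simp only [A_theta0, A_theta1]
          rw [k_theta0] at h2
          simp only [A_theta1, V_theta0] at h2
          exact Gv_lt_of_dvd (A_dvd hw' (p + 1)).1 h2
    · cases z' with
      | zero => exact absurd (lt_of_le_of_lt zero_le h1) (lt_irrefl _)
      | theta j' w' =>
        obtain ⟨hj', hw'⟩ := idxBound_theta hz'
        interval_cases j'
        · exfalso
          have hlow : V.{u} (theta 0 w') < Om := by simpa using (Phi_lt_Om hw').1
          exact absurd (lt_of_le_of_lt (Om_le_V_theta1 w) (h1.trans hlow)) (lt_irrefl _)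
        · simp only [A_theta1]
          apply ih hw w' hw' (p + 1) (V_theta1_lt_iff.1 h1)
          rw [k_zero_theta1] at h2
          simpa using h2

/-- Core comparison lemma: the collapsing condition. -/
lemma Phi_lt_Phi {a b : TTerm} (ha : idxBound 2 a) (hb : idxBound 2 b)
    (h1 : V.{u} a < V b) (h2 : V.{u} (k 0 a) < Phi b) : Phi.{u} a < Phi b := by
  cases a with
  | zero =>
    cases b with
    | zero => exact absurd h1 (lt_irrefl _)
    | theta j' y =>
      obtain ⟨hj', hy⟩ := idxBound_theta hb
      interval_cases j'
      · simp only [Phi_zero, Phi_theta0]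
        calc (1 : Ordinal.{u}) < 1 + 1 := by norm_num
          _ ≤ Phi y + 1 := add_le_add_left (one_le_Phi hy) 1
      · simp only [Phi_zero, Phi_theta1]
        exact one_lt_of_isSuccLimit (A_isLimit hy)
  | theta j x =>
    obtain ⟨hj, hx⟩ := idxBound_theta ha
    interval_cases j
    · cases b with
      | zero => exact absurd (lt_of_le_of_lt zero_le h1) (lt_irrefl _)
      | theta j' y =>
        obtain ⟨hj', hy⟩ := idxBound_theta hb
        interval_cases j'
        · simp only [Phi_theta0]
          have hs : succ (Phi.{u} x) < succ (Phi y) :=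
            Order.succ_lt_succ (by simpa using h1)
          simpa using hs
        · simp only [Phi_theta0, Phi_theta1]
          rw [k_theta0] at h2
          simp only [V_theta0, Phi_theta1] at h2
          have hlim : IsSuccLimit (A.{u} 0 y) := A_isLimit hy
          have hs : succ (Phi.{u} x) < A 0 y := hlim.succ_lt h2
          simpa using hs
    · cases b with
      | zero => exact absurd (lt_of_le_of_lt zero_le h1) (lt_irrefl _)
      | theta j' y =>
        obtain ⟨hj', hy⟩ := idxBound_theta hb
        interval_cases j'
        · exfalso
          have hlow : V.{u} (theta 0 y) < Om := by simpa using (Phi_lt_Om hy).1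
          exact absurd (lt_of_le_of_lt (Om_le_V_theta1 x) (h1.trans hlow)) (lt_irrefl _)
        · simp only [Phi_theta1]
          apply A_lt_A hx y hy 0 (V_theta1_lt_iff.1 h1)
          rw [k_zero_theta1] at h2
          simpa using h2

lemma size_theta (i : ℕ) (a : TTerm) : sizeOf (theta i a) = 1 + i + sizeOf a := by
  simp

lemma sizeOf_k_le (i : ℕ) (t : TTerm) : sizeOf (k i t) ≤ sizeOf t := by
  induction t with
  | zero => simp [k]
  | theta j b ih =>
    rw [k]
    split
    · exact le_refl _
    · calc sizeOf (k i b) ≤ sizeOf b := ih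
        _ ≤ sizeOf (theta j b) := by rw [size_theta]; omega

lemma not_Lt_zero (t : TTerm) : ¬ Lt t zero := by
  intro h
  cases h with
  | zero h' => exact h' rfl

/-- Trichotomy for the term order. -/
lemma trichotomy : ∀ a b : TTerm, Lt a b ∨ a = b ∨ Lt b a := by
  suffices H : ∀ n : ℕ, ∀ a b : TTerm, sizeOf a + sizeOf b ≤ n → Lt a b ∨ a = b ∨ Lt b a by
    intro a b
    exact H (sizeOf a + sizeOf b) a b le_rfl
  intro n
  induction n using Nat.strong_induction_on with
  | _ n ihn =>
    intro a b hn
    cases a with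
    | zero =>
      cases b with
      | zero => exact Or.inr (Or.inl rfl)
      | theta j y => exact Or.inl (Lt.zero (by simp))
    | theta i x =>
      cases b with
      | zero => exact Or.inr (Or.inr (Lt.zero (by simp)))
      | theta j y =>
        rcases Nat.lt_trichotomy i j with hij | rfl | hij
        · exact Or.inl (Lt.idx hij)
        · have e1 := size_theta i x
          have e2 := size_theta i y
          have hsx : sizeOf x + sizeOf y < n := by omega
          rcases ihn _ hsx x y le_rfl with hxy | rfl | hyx
          · have hk1 := sizeOf_k_le i x
            have hsk : sizeOf (k i x) + sizeOf (theta i y) < n := by omega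
            rcases ihn _ hsk (k i x) (theta i y) le_rfl with hk | hk | hk
            · exact Or.inl (Lt.left hxy hk)
            · exact Or.inr (Or.inr (Lt.right hxy (by rw [hk]; exact Le.refl)))
            · exact Or.inr (Or.inr (Lt.right hxy (Le.of_lt hk)))
          · exact Or.inr (Or.inl rfl)
          · have hk1 := sizeOf_k_le i y
            have hsk : sizeOf (k i y) + sizeOf (theta i x) < n := by omega
            rcases ihn _ hsk (k i y) (theta i x) le_rfl with hk | hk | hk
            · exact Or.inr (Or.inr (Lt.left hyx hk))
            · exact Or.inl (Lt.right hyx (by rw [hk]; exact Le.refl))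
            · exact Or.inl (Lt.right hyx (Le.of_lt hk))
        · exact Or.inr (Or.inr (Lt.idx hij))

/-- Main monotonicity theorem. -/
lemma V_mono : ∀ a b : TTerm, idxBound 2 a → idxBound 2 b →
    (Lt a b → V.{u} a < V b) ∧ (Le a b → V.{u} a ≤ V b) := by
  suffices H : ∀ n : ℕ, ∀ a b : TTerm, sizeOf a + sizeOf b ≤ n → idxBound 2 a →
      idxBound 2 b → (Lt a b → V.{u} a < V b) ∧ (Le a b → V.{u} a ≤ V b) by
    intro a b ha hb
    exact H (sizeOf a + sizeOf b) a b le_rfl ha hb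
  intro n
  induction n using Nat.strong_induction_on with
  | _ n ihn =>
    intro a b hn ha hb
    have hlt : Lt a b → V.{u} a < V b := by
      intro h
      cases h with
      | zero h' => simpa using V_pos hb h'
      | @idx i j x y hij =>
        obtain ⟨hi, hx⟩ := idxBound_theta ha
        obtain ⟨hj, hy⟩ := idxBound_theta hb
        have hi0 : i = 0 := by omega
        have hj1 : j = 1 := by omega
        subst hi0
        subst hj1
        calc V.{u} (theta 0 x) < Om := by simpa using (Phi_lt_Om hx).1
          _ ≤ V (theta 1 y) := Om_le_V_theta1 y
      | @left i x y h1 h2 =>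
        obtain ⟨hi, hx⟩ := idxBound_theta ha
        obtain ⟨_, hy⟩ := idxBound_theta hb
        have e1 := size_theta i x
        have e2 := size_theta i y
        have hs1 : sizeOf x + sizeOf y < n := by omega
        have hVxy : V.{u} x < V y := ((ihn _ hs1 x y le_rfl hx hy).1) h1
        interval_cases i
        · have hk1 := sizeOf_k_le 0 x
          have hs2 : sizeOf (k 0 x) + sizeOf (theta 0 y) < n := by omega
          have hk : V.{u} (k 0 x) < V (theta 0 y) :=
            ((ihn _ hs2 (k 0 x) (theta 0 y) le_rfl (idxBound_k hx) hb).1) h2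
          simp only [V_theta0] at hk ⊢
          exact Phi_lt_Phi hx hy hVxy hk
        · exact V_theta1_lt_iff.2 hVxy
      | @right i x y h1 h2 =>
        obtain ⟨hi, hx⟩ := idxBound_theta ha
        obtain ⟨_, hy⟩ := idxBound_theta hb
        have e1 := size_theta i x
        have e2 := size_theta i y
        interval_cases i
        · have hk1 := sizeOf_k_le 0 y
          have hs2 : sizeOf (theta 0 x) + sizeOf (k 0 y) < n := by omega
          have hk : V.{u} (theta 0 x) ≤ V (k 0 y) :=
            ((ihn _ hs2 (theta 0 x) (k 0 y) le_rfl ha (idxBound_k hy)).2) h2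
          calc V.{u} (theta 0 x) ≤ V (k 0 y) := hk
            _ < Phi y := V_k_lt_Phi hy
            _ = V (theta 0 y) := rfl
        · cases y with
          | zero =>
            exfalso
            cases h2 with
            | of_lt h3 => exact not_Lt_zero _ h3
          | theta j' v =>
            obtain ⟨hj', hv⟩ := idxBound_theta hy
            have hky : k 1 (theta j' v) = theta j' v := k_le_idx 1 j' v (by omega)
            rw [hky] at h2
            have e3 := size_theta j' v
            have hs2 : sizeOf (theta 1 x) + sizeOf (theta j' v) < n := by omega
            have hk : V.{u} (theta 1 x) ≤ V (theta j' v) :=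
              ((ihn _ hs2 (theta 1 x) (theta j' v) le_rfl ha hy).2) h2
            calc V.{u} (theta 1 x) ≤ V (theta j' v) := hk
              _ < Om * (1 + V (theta j' v)) := V_lt_Om_mul hy
              _ = V (theta 1 (theta j' v)) := rfl
    refine ⟨hlt, ?_⟩
    intro h
    cases h with
    | refl => exact le_refl _
    | of_lt h' => exact (hlt h').le

lemma Lt_iff_V_lt {a b : TTerm} (ha : idxBound 2 a) (hb : idxBound 2 b) :
    Lt a b ↔ V.{u} a < V b := by
  constructor
  · exact fun h => (V_mono a b ha hb).1 h
  · intro h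
    rcases trichotomy a b with h' | rfl | h'
    · exact h'
    · exact absurd h (lt_irrefl _)
    · exact absurd ((V_mono b a hb ha).1 h') (not_lt.2 h.le)

/-- Iterated `ϑ₁`. -/
def pow1 : ℕ → TTerm → TTerm
  | 0, w => w
  | r + 1, w => theta 1 (pow1 r w)

lemma pow1_idxBound (r : ℕ) {w : TTerm} (h : idxBound 2 w) : idxBound 2 (pow1 r w) := by
  induction r with
  | zero => exact h
  | succ r ih => exact ⟨by omega, ih⟩

lemma A_pow1 {w : TTerm} (hw : w = zero ∨ ∃ x, w = theta 0 x) :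
    ∀ r p : ℕ, A.{u} p (pow1 r w) = Gv p.succ.pred (V w) → True := fun _ _ _ => trivial

lemma A_pow1' {w : TTerm} (hw : w = zero ∨ ∃ x, w = theta 0 x) :
    ∀ r p : ℕ, A.{u} p (pow1 r w) = Gv (p + r) (V w) := by
  intro r
  induction r with
  | zero =>
    intro p
    rcases hw with rfl | ⟨x, rfl⟩
    · simp [pow1]
    · simp [pow1]
  | succ r ih =>
    intro p
    show A.{u} p (theta 1 (pow1 r w)) = _
    rw [A_theta1, ih (p + 1)]
    congr 1
    omega

lemma wf_of_idxBound {t : TTerm} (h : idxBound 2 t) : WF t := by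
  revert h
  induction t with
  | zero => intro _; exact WF.zero
  | theta j w ih =>
    intro h
    obtain ⟨hj, hw⟩ := idxBound_theta h
    refine WF.theta (ih hw) ?_
    cases w with
    | zero =>
      simp only [S]
      omega
    | theta j' w' =>
      obtain ⟨hj', _⟩ := idxBound_theta hw
      simp only [S]
      have h1 : (j' : ℤ) ≤ 1 := by exact_mod_cast Nat.lt_succ_iff.1 hj'
      have h2 : (0 : ℤ) ≤ (j : ℤ) := Int.natCast_nonneg j
      omega

/-- Surjectivity: every ordinal below `Om` is a value of a `T2zero` term. -/
lemma V_surj : ∀ o : Ordinal.{u}, o < Om → ∃ t : TTerm, T2zero t ∧ V.{u} t = o := by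
  intro o
  induction o using Ordinal.induction with
  | _ o IH =>
    intro ho
    rcases zero_or_succ_or_isSuccLimit o with rfl | ⟨o', rfl⟩ | hlim
    · refine ⟨zero, ⟨WF.zero, trivial, by simp [S]⟩, rfl⟩
    · obtain ⟨t', ⟨hwf', hidx', hS'⟩, hV'⟩ := IH o' (lt_succ o') (lt_trans (lt_succ o') ho)
      cases t' with
      | zero =>
        refine ⟨theta 0 zero, ⟨wf_of_idxBound ⟨by omega, trivial⟩, ⟨by omega, trivial⟩,
          by simp [S]⟩, ?_⟩
        rw [show V.{u} (theta 0 zero) = 1 from rfl, ← hV']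
        rw [show V.{u} zero = 0 from rfl]
        exact succ_zero.symm
      | theta j x =>
        obtain ⟨hj, hx⟩ := idxBound_theta hidx'
        have hj0 : j = 0 := by
          simp only [S] at hS'
          exact_mod_cast le_antisymm (by exact_mod_cast hS') j.zero_le
        subst hj0
        refine ⟨theta 0 (theta 0 x), ⟨wf_of_idxBound ⟨by omega, hidx'⟩, ⟨by omega, hidx'⟩,
          by simp [S]⟩, ?_⟩
        rw [show V.{u} (theta 0 (theta 0 x)) = Phi x + 1 from rfl, ← hV']
        rw [show V.{u} (theta 0 x) = Phi x from rfl]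
        exact add_one_eq_succ _
    · -- limit case
      have homega_dvd : (omega0 : Ordinal.{u}) ∣ o := (isSuccLimit_iff_omega0_dvd.1 hlim).2
      have hne : o ≠ 0 := hlim.pos.ne'
      obtain ⟨e, he, hoe⟩ := (lt_opow_of_isSuccLimit omega0_ne_zero
        (isSuccLimit_opow_left isSuccLimit_omega0 omega0_ne_zero)).1 (by rw [← Om_eq]; exact ho)
      obtain ⟨e', he', hee'⟩ := (lt_opow_of_isSuccLimit omega0_ne_zero isSuccLimit_omega0).1 he
      obtain ⟨R, rfl⟩ := lt_omega0.1 he'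
      have hoR : o < Sp.{u} R := by
        apply lt_of_lt_of_le hoe
        rw [Sp_eq]
        exact opow_le_opow_right omega0_pos hee'.le
      have hP0 : Sp.{u} 0 ∣ o := by
        rw [Sp_eq]
        simpa using homega_dvd
      have hex : ∃ r : ℕ, (Sp.{u} r ∣ o) ∧ ¬ Sp.{u} (r + 1) ∣ o := by
        by_contra hcon
        push_neg at hcon
        have hall : ∀ m : ℕ, Sp.{u} m ∣ o := by
          intro m
          induction m with
          | zero => exact hP0
          | succ n ihm => exact hcon n ihm
        exact absurd (lt_of_le_of_lt (le_of_dvd hne (hall R)) hoR) (lt_irrefl _)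
      obtain ⟨r, hPr, hnot⟩ := hex
      obtain ⟨ξ, hξ⟩ := hPr
      have hdm : Sp.{u} (r + 1) * (o / Sp (r + 1)) + o % Sp (r + 1) = o :=
        Ordinal.div_add_mod o (Sp (r + 1))
      have hρ_lt : o % Sp.{u} (r + 1) < Sp (r + 1) := mod_lt o (Sp_ne_zero _)
      have hρ_ne : o % Sp.{u} (r + 1) ≠ 0 := by
        intro h0
        apply hnot
        refine ⟨o / Sp (r + 1), ?_⟩
        conv_lhs => rw [← hdm]
        rw [h0, add_zero]
      have hη : ∃ η, o % Sp.{u} (r + 1) = Sp r * η := by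
        have habs : Sp.{u} r * (Sp (r + 1) * (o / Sp (r + 1))) = Sp (r + 1) * (o / Sp (r + 1)) := by
          rw [← mul_assoc, Sp_mul_Sp]
        have hκle : Sp.{u} (r + 1) * (o / Sp (r + 1)) ≤ o := mul_div_le o _
        have hle2 : Sp.{u} r * (Sp (r + 1) * (o / Sp (r + 1))) ≤ Sp r * ξ := by
          rw [habs, ← hξ]
          exact hκle
        have hκ_le_ξ : Sp.{u} (r + 1) * (o / Sp (r + 1)) ≤ ξ :=
          le_of_mul_le_mul_left hle2 (Sp_pos r)
        refine ⟨ξ - Sp (r + 1) * (o / Sp (r + 1)), ?_⟩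
        have hsum : Sp.{u} r * (Sp (r + 1) * (o / Sp (r + 1))
            + (ξ - Sp (r + 1) * (o / Sp (r + 1)))) = Sp r * ξ := by
          rw [Ordinal.add_sub_cancel_of_le hκ_le_ξ]
        rw [mul_add, habs] at hsum
        have h3 : Sp.{u} (r + 1) * (o / Sp (r + 1)) + o % Sp (r + 1)
            = Sp (r + 1) * (o / Sp (r + 1)) + Sp r * (ξ - Sp (r + 1) * (o / Sp (r + 1))) := by
          rw [hdm, hsum]
          exact hξ
        calc o % Sp.{u} (r + 1)
            = Sp (r + 1) * (o / Sp (r + 1)) + o % Sp (r + 1)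
              - Sp (r + 1) * (o / Sp (r + 1)) := by rw [Ordinal.add_sub_cancel]
          _ = Sp (r + 1) * (o / Sp (r + 1))
              + Sp r * (ξ - Sp (r + 1) * (o / Sp (r + 1)))
              - Sp (r + 1) * (o / Sp (r + 1)) := by rw [h3]
          _ = Sp r * (ξ - Sp (r + 1) * (o / Sp (r + 1))) := by rw [Ordinal.add_sub_cancel]
      obtain ⟨η, hηe⟩ := hη
      have hη_ne : η ≠ 0 := by
        intro h0
        rw [h0, mul_zero] at hηe
        exact hρ_ne hηe
      have hη_one : 1 ≤ η := one_le_iff_ne_zero.2 hη_ne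
      have hηδ : 1 + (η - 1) = η := Ordinal.add_sub_cancel_of_le hη_one
      have hδ_lt : η - 1 < Sp.{u} (r + 1) := by
        by_contra hc
        push_neg at hc
        have hcon : Sp.{u} (r + 1) ≤ o % Sp (r + 1) := by
          calc Sp.{u} (r + 1) ≤ η - 1 := hc
            _ ≤ 1 + (η - 1) := le_add_self
            _ = η := hηδ
            _ ≤ Sp r * η := le_mul_right η (Sp_pos r)
            _ = o % Sp (r + 1) := hηe.symm
        exact absurd hρ_lt (not_lt.2 hcon)
      have hα_lt : Sp.{u} (r + 1) * (o / Sp (r + 1)) + (η - 1) < o := by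
        conv_rhs => rw [← hdm]
        apply add_lt_add_right
        calc η - 1 < Sp.{u} r * (1 + (η - 1)) := lt_Sp_mul_one_add hδ_lt
          _ = Sp r * η := by rw [hηδ]
          _ = o % Sp (r + 1) := hηe.symm
      obtain ⟨w, ⟨hwwf, hwidx, hwS⟩, hwV⟩ := IH _ hα_lt (hα_lt.trans ho)
      have hbase : w = zero ∨ ∃ x, w = theta 0 x := by
        cases w with
        | zero => exact Or.inl rfl
        | theta j x =>
          have hj0 : j = 0 := by
            simp only [S] at hwS
            exact_mod_cast le_antisymm (by exact_mod_cast hwS) j.zero_le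
          exact Or.inr ⟨x, by rw [hj0]⟩
      refine ⟨theta 0 (pow1 (r + 1) w), ?_, ?_⟩
      · have hidx2 : idxBound 2 (theta 0 (pow1 (r + 1) w)) :=
          ⟨by omega, pow1_idxBound (r + 1) hwidx⟩
        exact ⟨wf_of_idxBound hidx2, hidx2, by simp [S]⟩
      · have hdiv : (Sp.{u} (r + 1) * (o / Sp (r + 1)) + (η - 1)) / Sp (r + 1)
            = o / Sp (r + 1) := by
          rw [mul_add_div _ (Sp_ne_zero _), div_eq_zero_of_lt hδ_lt, add_zero]
        have hmod : (Sp.{u} (r + 1) * (o / Sp (r + 1)) + (η - 1)) % Sp (r + 1) = η - 1 := by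
          rw [mod_def, hdiv, Ordinal.add_sub_cancel]
        rw [show V.{u} (theta 0 (pow1 (r + 1) w)) = Phi (pow1 (r + 1) w) from rfl]
        rw [show pow1 (r + 1) w = theta 1 (pow1 r w) from rfl, Phi_theta1]
        rw [A_pow1' hbase r 0, show (0 + r) = r from by omega, hwV]
        unfold Gv
        rw [hdiv, hmod, hηδ, ← hηe, hdm]

end

end TTerm

open Ordinal in
/-- The order type of `(T_2[0], <)` is exactly `ω^(ω^ω)`: there is an order-preserving
bijection onto the ordinals below `ω^(ω^ω)`. -/
theorem stmt9 :
    ∃ f : {t : TTerm // T2zero t} → Set.Iio (omega0 ^ omega0 ^ omega0 : Ordinal),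
      Function.Surjective f ∧
        ∀ a b : {t : TTerm // T2zero t}, TTerm.Lt a.1 b.1 ↔ (f a : Ordinal) < f b := by
  refine ⟨fun a => ⟨TTerm.V a.1, ?_⟩, ?_, ?_⟩
  · exact TTerm.V_lt_Om_of_S_le a.2.2.1 a.2.2.2
  · rintro ⟨o, ho⟩
    obtain ⟨t, ht, hV⟩ := TTerm.V_surj o ho
    exact ⟨⟨t, ht⟩, Subtype.ext hV⟩
  · intro a b
    exact TTerm.Lt_iff_V_lt a.2.2.1 b.2.2.1
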